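/- arXiv:1909.11224 — 4 statements merged into one kernel-verified Lean document; each statement's English description precedes it below -/
import Mathlib

section
/- (Spatial Pruning) If the min-corner of probabilistic object o'^p dominates the max-corner of probabilistic object o^p, then the dominance probability Pr{o'^p ≺ o^p} equals 1. -/
open scoped Classical BigOperators

def dominates {d : ℕ} (o o' : Fin d → ℝ) : Prop :=
  (∀ i, o i ≥ o' i) ∧ (∃ j, o j > o' j)

theorem spatial_pruning
    {d : ℕ} {ι κ : Type*} [Fintype ι] [Fintype κ] [Nonempty ι] [Nonempty κ]
    (x : ι → Fin d → ℝ)  -- instances of o^p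
    (y : κ → Fin d → ℝ)  -- instances of o'^p
    (p : ι → ℝ) (q : κ → ℝ)
    (hp0 : ∀ i, 0 ≤ p i) (hq0 : ∀ j, 0 ≤ q j)
    (hp1 : ∑ i, p i = 1) (hq1 : ∑ j, q j = 1)
    (hdom : dominates
      (fun k => Finset.univ.inf' Finset.univ_nonempty (fun j => y j k))   -- o'^p.min
      (fun k => Finset.univ.sup' Finset.univ_nonempty (fun i => x i k))) -- o^p.max
    :
    ∑ j, ∑ i, q j * p i * (if dominates (y j) (x i) then (1 : ℝ) else 0) = 1 := by
  have key : ∀ j i, dominates (y j) (x i) := by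
    intro j i
    obtain ⟨h1, k, hk⟩ := hdom
    refine ⟨fun m => ?_, ⟨k, ?_⟩⟩
    · exact le_trans (Finset.le_sup' (fun i => x i m) (Finset.mem_univ i))
        (le_trans (h1 m) (Finset.inf'_le (fun j => y j m) (Finset.mem_univ j)))
    · exact lt_of_le_of_lt (Finset.le_sup' (fun i => x i k) (Finset.mem_univ i))
        (lt_of_lt_of_le hk (Finset.inf'_le (fun j => y j k) (Finset.mem_univ j)))
  calc ∑ j, ∑ i, q j * p i * (if dominates (y j) (x i) then (1 : ℝ) else 0)
      = ∑ j, ∑ i, q j * p i := by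
        refine Finset.sum_congr rfl fun j _ => Finset.sum_congr rfl fun i _ => ?_
        rw [if_pos (key j i), mul_one]
    _ = 1 := by simp [← Finset.mul_sum, ← Finset.sum_mul, hp1, hq1]
end

section
/- (Max-Corner Pruning) Let o^p be a probabilistic object with max-corner o^p.max, and o'^p another probabilistic object. If Pr{o'^p ≺ o^p.max} ≥ 1 − α, then the skyline probability of o^p restricted to the single competitor o'^p, namely Σ_{o ∈ o^p} o.p · (1 − Pr{o'^p ≺ o}), is at most α. -/
open scoped Classical BigOperators

theorem max_corner_pruning
    {d : ℕ} {ι κ : Type*} [Fintype ι] [Fintype κ] [Nonempty ι]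
    (x : ι → Fin d → ℝ)  -- instances of o^p
    (y : κ → Fin d → ℝ)  -- instances of o'^p
    (p : ι → ℝ) (q : κ → ℝ)
    (hp0 : ∀ i, 0 ≤ p i) (hq0 : ∀ j, 0 ≤ q j)
    (hp1 : ∑ i, p i = 1) (hq1 : ∑ j, q j = 1)
    (α : ℝ) (hα0 : 0 ≤ α) (hα1 : α ≤ 1)
    (hmax : (∑ j, q j * (if dominates (y j)
        (fun k => Finset.univ.sup' Finset.univ_nonempty (fun i => x i k)) then (1 : ℝ) else 0))
        ≥ 1 - α) :
    ∑ i, p i * (1 - ∑ j, q j * (if dominates (y j) (x i) then (1 : ℝ) else 0)) ≤ α := by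
  set M : Fin d → ℝ := fun k => Finset.univ.sup' Finset.univ_nonempty (fun i => x i k) with hM
  have key : ∀ i, (1 : ℝ) - α ≤ ∑ j, q j * (if dominates (y j) (x i) then (1 : ℝ) else 0) := by
    intro i
    refine le_trans hmax (Finset.sum_le_sum ?_)
    intro j _
    have hmono : dominates (y j) M → dominates (y j) (x i) := by
      rintro ⟨h1, k, hk⟩
      have hMi : ∀ m, x i m ≤ M m := fun m =>
        Finset.le_sup' (fun i => x i m) (Finset.mem_univ i)
      exact ⟨fun m => le_trans (hMi m) (h1 m), k, lt_of_le_of_lt (hMi k) hk⟩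
    by_cases h : dominates (y j) M
    · simp [h, hmono h]
    · simp only [h, if_false, mul_zero]
      exact mul_nonneg (hq0 j) (by split <;> norm_num)
  calc ∑ i, p i * (1 - ∑ j, q j * (if dominates (y j) (x i) then (1 : ℝ) else 0))
      ≤ ∑ i, p i * α := by
        refine Finset.sum_le_sum fun i _ => mul_le_mul_of_nonneg_left ?_ (hp0 i)
        linarith [key i]
    _ = α := by rw [← Finset.sum_mul, hp1, one_mul]
end

section
/- (Lower bound via min-corner) The skyline probability of a probabilistic object o^p against competitor set S is bounded below by the skyline probability of its min-corner: Σ_{o ∈ o^p} o.p · Π_{q ∈ S}(1 − Pr{q ≺ o}) ≥ Π_{q ∈ S}(1 − Pr{q ≺ o^p.min}). -/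
open scoped Classical BigOperators

theorem skyline_probability_lower_bound_min_corner
    {d : ℕ} {ι γ : Type*} [Fintype ι] [Nonempty ι]
    (x : ι → Fin d → ℝ) (p : ι → ℝ)
    (hp0 : ∀ a, 0 ≤ p a) (hp1 : ∑ a, p a = 1)
    (K : γ → Type*) [∀ g, Fintype (K g)]
    (inst : ∀ g, K g → Fin d → ℝ) (w : ∀ g, K g → ℝ)
    (hw0 : ∀ g (s : K g), 0 ≤ w g s) (hw1 : ∀ g, ∑ s, w g s = 1)
    (S : Finset γ) :
    ∑ a, p a * ∏ g ∈ S,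
        (1 - ∑ s, w g s * (if dominates (inst g s) (x a) then (1 : ℝ) else 0))
      ≥
    ∏ g ∈ S,
        (1 - ∑ s, w g s * (if dominates (inst g s)
            (fun k => Finset.univ.inf' Finset.univ_nonempty (fun a => x a k))
          then (1 : ℝ) else 0)) := by
  set m : Fin d → ℝ := fun k => Finset.univ.inf' Finset.univ_nonempty (fun a => x a k) with hm
  set P : ℝ := ∏ g ∈ S, (1 - ∑ s, w g s * (if dominates (inst g s) m then (1 : ℝ) else 0))
    with hP
  have hm_le : ∀ a k, m k ≤ x a k := fun a k =>
    Finset.inf'_le _ (Finset.mem_univ a)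
  -- probabilities are in [0,1]
  have hpr01 : ∀ (g : γ) (y : Fin d → ℝ),
      0 ≤ ∑ s, w g s * (if dominates (inst g s) y then (1 : ℝ) else 0) ∧
      ∑ s, w g s * (if dominates (inst g s) y then (1 : ℝ) else 0) ≤ 1 := by
    intro g y
    constructor
    · exact Finset.sum_nonneg fun s _ => mul_nonneg (hw0 g s) (by positivity)
    · calc ∑ s, w g s * (if dominates (inst g s) y then (1 : ℝ) else 0)
          ≤ ∑ s, w g s := by
            refine Finset.sum_le_sum fun s _ => ?_
            have : (if dominates (inst g s) y then (1 : ℝ) else 0) ≤ 1 := by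
              split <;> norm_num
            calc w g s * (if dominates (inst g s) y then (1 : ℝ) else 0)
                ≤ w g s * 1 := mul_le_mul_of_nonneg_left this (hw0 g s)
              _ = w g s := mul_one _
      _ = 1 := hw1 g
  -- each min-factor nonneg and ≤ corresponding a-factor
  have hfac : ∀ (a : ι) (g : γ),
      (1 - ∑ s, w g s * (if dominates (inst g s) m then (1 : ℝ) else 0)) ≤
      (1 - ∑ s, w g s * (if dominates (inst g s) (x a) then (1 : ℝ) else 0)) := by
    intro a g
    have : ∑ s, w g s * (if dominates (inst g s) (x a) then (1 : ℝ) else 0) ≤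
        ∑ s, w g s * (if dominates (inst g s) m then (1 : ℝ) else 0) := by
      refine Finset.sum_le_sum fun s _ => ?_
      refine mul_le_mul_of_nonneg_left ?_ (hw0 g s)
      by_cases h : dominates (inst g s) (x a)
      · have hdm : dominates (inst g s) m := by
          obtain ⟨hge, j, hj⟩ := h
          exact ⟨fun i => le_trans (hm_le a i) (hge i), j, lt_of_le_of_lt (hm_le a j) hj⟩
        simp [h, hdm]
      · simp only [h, if_false]
        split <;> norm_num
    linarith
  have hfac0 : ∀ g : γ,
      0 ≤ (1 - ∑ s, w g s * (if dominates (inst g s) m then (1 : ℝ) else 0)) := by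
    intro g
    have := (hpr01 g m).2
    linarith
  have hprod : ∀ a : ι, P ≤ ∏ g ∈ S,
      (1 - ∑ s, w g s * (if dominates (inst g s) (x a) then (1 : ℝ) else 0)) := by
    intro a
    exact Finset.prod_le_prod (fun g _ => hfac0 g) (fun g _ => hfac a g)
  calc P = (∑ a, p a) * P := by rw [hp1, one_mul]
    _ = ∑ a, p a * P := by rw [Finset.sum_mul]
    _ ≤ ∑ a, p a * ∏ g ∈ S,
        (1 - ∑ s, w g s * (if dominates (inst g s) (x a) then (1 : ℝ) else 0)) :=
      Finset.sum_le_sum fun a _ => mul_le_mul_of_nonneg_left (hprod a) (hp0 a)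
end

section
/- (No false dismissals) If a probabilistic object o^p is dominated by another probabilistic object n^p with probability Pr{n^p ≺ o^p} ≥ 1 − α, then the skyline probability of o^p in any window containing n^p as a competitor is at most α: Σ_{o ∈ o^p} o.p · Π_{q ∈ S}(1 − Pr{q ≺ o}) ≤ α whenever n^p ∈ S. -/
open scoped Classical BigOperators

theorem no_false_dismissals
    {d : ℕ} {ι γ : Type*} [Fintype ι]
    (x : ι → Fin d → ℝ) (p : ι → ℝ)
    (hp0 : ∀ a, 0 ≤ p a) (hp1 : ∑ a, p a = 1)
    (K : γ → Type*) [∀ g, Fintype (K g)]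
    (inst : ∀ g, K g → Fin d → ℝ) (w : ∀ g, K g → ℝ)
    (hw0 : ∀ g (s : K g), 0 ≤ w g s) (hw1 : ∀ g, ∑ s, w g s = 1)
    (α : ℝ) (hα0 : 0 ≤ α) (hα1 : α ≤ 1)
    (S : Finset γ) (np : γ) (hnp : np ∈ S)
    (hdom : (∑ s, ∑ a, w np s * p a *
        (if dominates (inst np s) (x a) then (1 : ℝ) else 0)) ≥ 1 - α) :
    ∑ a, p a * ∏ g ∈ S,
        (1 - ∑ s, w g s * (if dominates (inst g s) (x a) then (1 : ℝ) else 0)) ≤ α := by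
  set f : γ → ι → ℝ := fun g a => ∑ s, w g s * (if dominates (inst g s) (x a) then (1 : ℝ) else 0)
    with hf
  have hf0 : ∀ g a, 0 ≤ f g a := by
    intro g a
    apply Finset.sum_nonneg
    intro s _
    have : (0:ℝ) ≤ (if dominates (inst g s) (x a) then (1 : ℝ) else 0) := by positivity
    exact mul_nonneg (hw0 g s) this
  have hf1 : ∀ g a, f g a ≤ 1 := by
    intro g a
    calc f g a ≤ ∑ s, w g s := by
          apply Finset.sum_le_sum
          intro s _
          by_cases h : dominates (inst g s) (x a) <;> simp [h, hw0 g s]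
      _ = 1 := hw1 g
  have key : ∀ a, (∏ g ∈ S, (1 - f g a)) ≤ 1 - f np a := by
    intro a
    have := Finset.prod_le_one (s := S.erase np)
      (f := fun g => 1 - f g a)
      (fun g _ => by linarith [hf1 g a]) (fun g _ => by linarith [hf0 g a])
    calc (∏ g ∈ S, (1 - f g a)) = (1 - f np a) * ∏ g ∈ S.erase np, (1 - f g a) := by
          exact (Finset.mul_prod_erase S (fun g => 1 - f g a) hnp).symm
      _ ≤ (1 - f np a) * 1 := by
          apply mul_le_mul_of_nonneg_left this
          linarith [hf1 np a]
      _ = 1 - f np a := by ring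
  have hsum : (∑ a, p a * f np a) ≥ 1 - α := by
    have : (∑ a, p a * f np a)
        = ∑ s, ∑ a, w np s * p a * (if dominates (inst np s) (x a) then (1 : ℝ) else 0) := by
      rw [Finset.sum_comm]
      apply Finset.sum_congr rfl
      intro a _
      rw [hf, Finset.mul_sum]
      apply Finset.sum_congr rfl
      intro s _
      ring
    linarith [hdom, this.ge]
  calc ∑ a, p a * ∏ g ∈ S, (1 - f g a)
      ≤ ∑ a, p a * (1 - f np a) := by
        apply Finset.sum_le_sum
        intro a _
        exact mul_le_mul_of_nonneg_left (key a) (hp0 a)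
    _ = 1 - ∑ a, p a * f np a := by
        simp [mul_sub, Finset.sum_sub_distrib, hp1]
    _ ≤ α := by linarith
end
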